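/- For ε_m(ω) the Drude permittivity with parameters ε_0, ε_∞, ω_P, Γ > 0, every complex root ω of ε_m(ω)/ε_s = k with ε_s > 0 and k ≤ 0 has strictly negative imaginary part. -/

import Mathlib

open Complex

/-- Every complex root of the Drude dispersion equation `ε_m(ω)/ε_s = k`
with `k ≤ 0` has strictly negative imaginary part. -/
theorem drude_root_im_neg
    (ε0 εinf ωP Γ εs : ℝ) (hε0 : 0 < ε0) (hεinf : 0 < εinf) (hωP : 0 < ωP)
    (hΓ : 0 < Γ) (hεs : 0 < εs) (k : ℝ) (hk : k ≤ 0)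
    (ω : ℂ) (hω : ω ^ 2 + I * ω * (Γ : ℂ) ≠ 0)
    (hroot : (ε0 : ℂ) * ((εinf : ℂ) - (ωP : ℂ) ^ 2 / (ω ^ 2 + I * ω * (Γ : ℂ))) / (εs : ℂ)
      = (k : ℂ)) :
    ω.im < 0 := by
  set D : ℂ := ω ^ 2 + I * ω * (Γ : ℂ) with hDdef
  have hM : (0:ℝ) < ε0 * εinf - k * εs := by nlinarith
  have hεs' : (εs:ℂ) ≠ 0 := by exact_mod_cast hεs.ne'
  have hε0' : (ε0:ℂ) ≠ 0 := by exact_mod_cast hε0.ne'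
  have hM' : ((ε0 * εinf - k * εs : ℝ) : ℂ) ≠ 0 := by exact_mod_cast hM.ne'
  have hroot' : (ε0:ℂ) * ((εinf:ℂ) * D - (ωP:ℂ) ^ 2) = (k:ℂ) * (D * (εs:ℂ)) := by
    field_simp at hroot
    rw [hroot]; ring
  have hM'' : (ε0:ℂ) * (εinf:ℂ) - (k:ℂ) * (εs:ℂ) ≠ 0 := by push_cast at hM'; exact hM'
  have hD : D = ((ε0 * ωP ^ 2 / (ε0 * εinf - k * εs) : ℝ) : ℂ) := by
    push_cast
    rw [eq_div_iff hM'']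
    linear_combination hroot'
  have him : D.im = 0 := by rw [hD]; exact Complex.ofReal_im _
  have hre : (0:ℝ) < D.re := by
    rw [hD]
    simp only [Complex.ofReal_re]
    positivity
  have him' : ω.re * (2 * ω.im + Γ) = 0 := by
    have : D.im = ω.re * (2 * ω.im + Γ) := by
      simp [hDdef, pow_two, Complex.add_im, Complex.mul_im, Complex.mul_re,
        Complex.I_re, Complex.I_im, Complex.ofReal_re, Complex.ofReal_im]
      ring
    linarith [this ▸ him]
  have hre' : (0:ℝ) < ω.re ^ 2 - ω.im ^ 2 - Γ * ω.im := by
    have : D.re = ω.re ^ 2 - ω.im ^ 2 - Γ * ω.im := by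
      simp [hDdef, pow_two, Complex.add_re, Complex.mul_im, Complex.mul_re,
        Complex.I_re, Complex.I_im, Complex.ofReal_re, Complex.ofReal_im]
      ring
    linarith [this ▸ hre]
  rcases mul_eq_zero.mp him' with h | h
  · -- ω.re = 0
    nlinarith [sq_nonneg ω.im]
  · -- 2 ω.im + Γ = 0
    linarith
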